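/- arXiv:1309.2043 — 2 statements merged into one kernel-verified Lean document; each statement's English description precedes it below -/
import Mathlib

section
/- Let X be a Banach space, k ∈ ℕ ∪ {∞}, r > 0, and suppose f : B(0,r) → X is C^k, where B(0,r) ⊂ ℝ^m. Let ξ : I → [0,1] be continuous on a compact interval I. Define F(μ)(t) := f(ξ(t)·μ) for μ ∈ B(0,r), t ∈ I. Then the map μ ↦ F(μ), from B(0,r) into the Banach space C(I, X) of continuous X-valued functions with the sup norm, is C^k. -/
open Metric Set

section Aux

variable {m : ℕ} {a b : ℝ}

open Classical in
/-- The parameter-to-map operator: `μ ↦ (t ↦ f (ξ t • μ))`, defined as a junk value `0`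
when the resulting function is not continuous. -/
noncomputable def Fmap (a b : ℝ) (ξ : Set.Icc a b → ℝ) {Y : Type*} [NormedAddCommGroup Y]
    (f : EuclideanSpace ℝ (Fin m) → Y) (μ : EuclideanSpace ℝ (Fin m)) : C(Set.Icc a b, Y) :=
  if h : Continuous (fun t : Set.Icc a b => f (ξ t • μ)) then ⟨_, h⟩ else 0

lemma smul_mem_ball_of_abs_le {r : ℝ} {μ : EuclideanSpace ℝ (Fin m)} (hμ : μ ∈ ball 0 r)
    {c : ℝ} (hc : |c| ≤ 1) : c • μ ∈ ball (0 : EuclideanSpace ℝ (Fin m)) r := by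
  rw [mem_ball_zero_iff] at hμ ⊢
  calc ‖c • μ‖ = |c| * ‖μ‖ := by rw [norm_smul, Real.norm_eq_abs]
    _ ≤ 1 * ‖μ‖ := by
        apply mul_le_mul_of_nonneg_right hc (norm_nonneg _)
    _ < r := by simpa using hμ

lemma Fmap_continuous_cond {r : ℝ} {ξ : Set.Icc a b → ℝ} (hξ : Continuous ξ)
    (hξ1 : ∀ t, |ξ t| ≤ 1) {Y : Type*} [NormedAddCommGroup Y]
    {f : EuclideanSpace ℝ (Fin m) → Y} (hf : ContinuousOn f (ball 0 r))
    {μ : EuclideanSpace ℝ (Fin m)} (hμ : μ ∈ ball 0 r) :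
    Continuous (fun t : Set.Icc a b => f (ξ t • μ)) :=
  hf.comp_continuous (hξ.smul continuous_const)
    (fun t => smul_mem_ball_of_abs_le hμ (hξ1 t))

lemma Fmap_apply {r : ℝ} {ξ : Set.Icc a b → ℝ} (hξ : Continuous ξ)
    (hξ1 : ∀ t, |ξ t| ≤ 1) {Y : Type*} [NormedAddCommGroup Y]
    {f : EuclideanSpace ℝ (Fin m) → Y} (hf : ContinuousOn f (ball 0 r))
    {μ : EuclideanSpace ℝ (Fin m)} (hμ : μ ∈ ball 0 r) (t : Set.Icc a b) :
    Fmap a b ξ f μ t = f (ξ t • μ) := by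
  rw [Fmap, dif_pos (Fmap_continuous_cond hξ hξ1 hf hμ)]
  rfl

/-- Auxiliary linear map for `Lam`. -/
noncomputable def LamAux (a b : ℝ) (ξ : Set.Icc a b → ℝ) (hξ : Continuous ξ)
    (hξ1 : ∀ t, |ξ t| ≤ 1) {Y : Type*} [NormedAddCommGroup Y] [NormedSpace ℝ Y]
    (u : C(Set.Icc a b, EuclideanSpace ℝ (Fin m) →L[ℝ] Y)) :
    EuclideanSpace ℝ (Fin m) →L[ℝ] C(Set.Icc a b, Y) :=
  LinearMap.mkContinuous
    ({ toFun := fun h => ContinuousMap.mk (fun t => ξ t • (u t h))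
        (hξ.smul (u.continuous.clm_apply continuous_const))
       map_add' := fun h₁ h₂ => by
        apply ContinuousMap.ext; intro t
        show ξ t • (u t (h₁ + h₂)) = ξ t • (u t h₁) + ξ t • (u t h₂)
        rw [map_add, smul_add]
       map_smul' := fun c h => by
        apply ContinuousMap.ext; intro t
        show ξ t • (u t (c • h)) = c • (ξ t • (u t h))
        rw [map_smul, smul_comm] } :
      EuclideanSpace ℝ (Fin m) →ₗ[ℝ] C(Set.Icc a b, Y))
    ‖u‖ (fun h => by
      rw [ContinuousMap.norm_le _ (mul_nonneg (norm_nonneg u) (norm_nonneg h))]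
      intro t
      show ‖ξ t • (u t h)‖ ≤ ‖u‖ * ‖h‖
      calc ‖ξ t • (u t h)‖ = |ξ t| * ‖u t h‖ := by
              simp [norm_smul, Real.norm_eq_abs]
        _ ≤ 1 * ‖u t h‖ := mul_le_mul_of_nonneg_right (hξ1 t) (norm_nonneg _)
        _ = ‖u t h‖ := one_mul _
        _ ≤ ‖u t‖ * ‖h‖ := (u t).le_opNorm h
        _ ≤ ‖u‖ * ‖h‖ :=
              mul_le_mul_of_nonneg_right (u.norm_coe_le_norm t) (norm_nonneg _))

/-- Auxiliary: `Lam` as a linear map. -/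
noncomputable def LamLin (a b : ℝ) (ξ : Set.Icc a b → ℝ) (hξ : Continuous ξ)
    (hξ1 : ∀ t, |ξ t| ≤ 1) {Y : Type*} [NormedAddCommGroup Y] [NormedSpace ℝ Y] :
    C(Set.Icc a b, EuclideanSpace ℝ (Fin m) →L[ℝ] Y) →ₗ[ℝ]
      (EuclideanSpace ℝ (Fin m) →L[ℝ] C(Set.Icc a b, Y)) where
  toFun := LamAux a b ξ hξ hξ1
  map_add' u v := by
    apply ContinuousLinearMap.ext; intro h
    apply ContinuousMap.ext; intro t
    show ξ t • ((u + v) t h) = ξ t • (u t h) + ξ t • (v t h)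
    rw [ContinuousMap.add_apply, ContinuousLinearMap.add_apply, smul_add]
  map_smul' c u := by
    apply ContinuousLinearMap.ext; intro h
    apply ContinuousMap.ext; intro t
    show ξ t • ((c • u) t h) = c • (ξ t • (u t h))
    rw [ContinuousMap.smul_apply, ContinuousLinearMap.smul_apply, smul_comm]

lemma LamLin_norm_le (a b : ℝ) (ξ : Set.Icc a b → ℝ) (hξ : Continuous ξ)
    (hξ1 : ∀ t, |ξ t| ≤ 1) {Y : Type*} [NormedAddCommGroup Y] [NormedSpace ℝ Y]
    (u : C(Set.Icc a b, EuclideanSpace ℝ (Fin m) →L[ℝ] Y)) :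
    ‖LamLin a b ξ hξ hξ1 u‖ ≤ 1 * ‖u‖ := by
  rw [one_mul]
  show ‖LamAux a b ξ hξ hξ1 u‖ ≤ ‖u‖
  exact LinearMap.mkContinuous_norm_le _ (norm_nonneg u) _

set_option maxHeartbeats 1000000 in
set_option synthInstance.maxHeartbeats 400000 in
/-- The continuous linear map `C(I, E →L[ℝ] Y) →L[ℝ] (E →L[ℝ] C(I, Y))` sending
`u` to `h ↦ (t ↦ ξ t • u t h)`. -/
noncomputable def Lam (a b : ℝ) (ξ : Set.Icc a b → ℝ) (hξ : Continuous ξ)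
    (hξ1 : ∀ t, |ξ t| ≤ 1) {Y : Type*} [NormedAddCommGroup Y] [NormedSpace ℝ Y] :
    C(Set.Icc a b, EuclideanSpace ℝ (Fin m) →L[ℝ] Y) →L[ℝ]
      (EuclideanSpace ℝ (Fin m) →L[ℝ] C(Set.Icc a b, Y)) :=
  { LamLin (m := m) (Y := Y) a b ξ hξ hξ1 with
    cont := by
      exact AddMonoidHomClass.continuous_of_bound (LamLin (m := m) (Y := Y) a b ξ hξ hξ1) 1
        (LamLin_norm_le a b ξ hξ hξ1) }

lemma Lam_apply {ξ : Set.Icc a b → ℝ} (hξ : Continuous ξ) (hξ1 : ∀ t, |ξ t| ≤ 1)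
    {Y : Type*} [NormedAddCommGroup Y] [NormedSpace ℝ Y]
    (u : C(Set.Icc a b, EuclideanSpace ℝ (Fin m) →L[ℝ] Y))
    (h : EuclideanSpace ℝ (Fin m)) (t : Set.Icc a b) :
    Lam (m := m) (Y := Y) a b ξ hξ hξ1 u h t = ξ t • (u t h) := by
  rfl

lemma norm_sub_le_of_mem_segment' {E : Type*} [NormedAddCommGroup E] [NormedSpace ℝ E]
    {x y z : E} (hz : z ∈ segment ℝ x y) : ‖z - x‖ ≤ ‖y - x‖ := by
  obtain ⟨p, q, hp, hq, hpq, rfl⟩ := hz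
  have hzx : p • x + q • y - x = q • (y - x) := by
    have hp1 : p = 1 - q := by linarith
    rw [hp1, smul_sub]
    module
  rw [hzx, norm_smul, Real.norm_eq_abs, abs_of_nonneg hq]
  have : q ≤ 1 := by linarith
  calc q * ‖y - x‖ ≤ 1 * ‖y - x‖ := mul_le_mul_of_nonneg_right this (norm_nonneg _)
    _ = ‖y - x‖ := one_mul _

/-- The key differentiability statement: at every point of the ball, `Fmap f` has
Fréchet derivative `Lam (Fmap (fderiv ℝ f) μ₀)`. -/
lemma Fmap_hasFDerivAt {r : ℝ} (hab : a ≤ b)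
    {ξ : Set.Icc a b → ℝ} (hξ : Continuous ξ) (hξ1 : ∀ t, |ξ t| ≤ 1)
    {Y : Type*} [NormedAddCommGroup Y] [NormedSpace ℝ Y]
    {f : EuclideanSpace ℝ (Fin m) → Y}
    (hf : ContDiffOn ℝ 1 f (ball (0 : EuclideanSpace ℝ (Fin m)) r))
    {μ₀ : EuclideanSpace ℝ (Fin m)} (hμ₀ : μ₀ ∈ ball (0 : EuclideanSpace ℝ (Fin m)) r) :
    HasFDerivAt (Fmap a b ξ f)
      (Lam (m := m) (Y := Y) a b ξ hξ hξ1 (Fmap a b ξ (fderiv ℝ f) μ₀)) μ₀ := by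
  set g := fderiv ℝ f with hg_def
  have hr₀ : ‖μ₀‖ < r := mem_ball_zero_iff.mp hμ₀
  set ρ : ℝ := (‖μ₀‖ + r) / 2 with hρ_def
  have hρ1 : ‖μ₀‖ < ρ := by
    rw [hρ_def]; linarith
  have hρ2 : ρ < r := by rw [hρ_def]; linarith
  set K : Set (EuclideanSpace ℝ (Fin m)) := closedBall 0 ρ with hK_def
  have hKball : K ⊆ ball 0 r := closedBall_subset_ball hρ2
  have hKcompact : IsCompact K := isCompact_closedBall _ _
  have hKconvex : Convex ℝ K := convex_closedBall _ _
  have hdiff : DifferentiableOn ℝ f (ball 0 r) :=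
    hf.differentiableOn one_ne_zero
  have hgcont : ContinuousOn g (ball 0 r) :=
    hf.continuousOn_fderiv_of_isOpen isOpen_ball le_rfl
  have hguc : UniformContinuousOn g K :=
    hKcompact.uniformContinuousOn_of_continuous (hgcont.mono hKball)
  have hderiv : ∀ z ∈ ball (0 : EuclideanSpace ℝ (Fin m)) r, HasFDerivAt f (g z) z :=
    fun z hz => ((hdiff z hz).differentiableAt (isOpen_ball.mem_nhds hz)).hasFDerivAt
  rw [hasFDerivAt_iff_isLittleO_nhds_zero, Asymptotics.isLittleO_iff]
  intro ε hε
  obtain ⟨δ, hδpos, hδ⟩ := Metric.uniformContinuousOn_iff.mp hguc ε hε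
  rw [Metric.eventually_nhds_iff]
  refine ⟨min δ ((r - ‖μ₀‖) / 2), lt_min hδpos (by linarith), ?_⟩
  intro h hh
  rw [dist_zero_right] at hh
  have hhδ : ‖h‖ < δ := lt_of_lt_of_le hh (min_le_left _ _)
  have hhρ : ‖μ₀ + h‖ ≤ ρ := by
    have : ‖h‖ < (r - ‖μ₀‖) / 2 := lt_of_lt_of_le hh (min_le_right _ _)
    calc ‖μ₀ + h‖ ≤ ‖μ₀‖ + ‖h‖ := norm_add_le _ _
      _ ≤ ρ := by rw [hρ_def]; linarith
  have hμ₀h : μ₀ + h ∈ ball (0 : EuclideanSpace ℝ (Fin m)) r :=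
    mem_ball_zero_iff.mpr (lt_of_le_of_lt hhρ hρ2)
  show ‖Fmap a b ξ f (μ₀ + h) - Fmap a b ξ f μ₀
      - Lam (m := m) (Y := Y) a b ξ hξ hξ1 (Fmap a b ξ g μ₀) h‖ ≤ ε * ‖h‖
  rw [ContinuousMap.norm_le _ (mul_nonneg hε.le (norm_nonneg h))]
  intro t
  -- pointwise estimate
  set x : EuclideanSpace ℝ (Fin m) := ξ t • μ₀ with hx_def
  set y : EuclideanSpace ℝ (Fin m) := ξ t • (μ₀ + h) with hy_def
  have hxK : x ∈ K := by
    rw [hK_def, mem_closedBall_zero_iff, hx_def, norm_smul, Real.norm_eq_abs]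
    calc |ξ t| * ‖μ₀‖ ≤ 1 * ‖μ₀‖ := mul_le_mul_of_nonneg_right (hξ1 t) (norm_nonneg _)
      _ ≤ ρ := by rw [one_mul]; exact hρ1.le
  have hyK : y ∈ K := by
    rw [hK_def, mem_closedBall_zero_iff, hy_def, norm_smul, Real.norm_eq_abs]
    calc |ξ t| * ‖μ₀ + h‖ ≤ 1 * ‖μ₀ + h‖ :=
          mul_le_mul_of_nonneg_right (hξ1 t) (norm_nonneg _)
      _ ≤ ρ := by rw [one_mul]; exact hhρ
  have hseg : segment ℝ x y ⊆ K := hKconvex.segment_subset hxK hyK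
  have hyx : y - x = ξ t • h := by rw [hy_def, hx_def, smul_add]; abel
  have hyxnorm : ‖y - x‖ ≤ ‖h‖ := by
    rw [hyx, norm_smul, Real.norm_eq_abs]
    calc |ξ t| * ‖h‖ ≤ 1 * ‖h‖ := mul_le_mul_of_nonneg_right (hξ1 t) (norm_nonneg _)
      _ = ‖h‖ := one_mul _
  have key : ‖f y - f x - (g x) (y - x)‖ ≤ ε * ‖y - x‖ := by
    apply (convex_segment x y).norm_image_sub_le_of_norm_hasFDerivWithin_le'
      (f' := g) (φ := g x) (fun z hz => (hderiv z (hKball (hseg hz))).hasFDerivWithinAt)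
      ?_ (left_mem_segment ℝ x y) (right_mem_segment ℝ x y)
    intro z hz
    have hzx : ‖z - x‖ < δ := lt_of_le_of_lt (le_trans (norm_sub_le_of_mem_segment' hz)
      hyxnorm) hhδ
    have := hδ z (hseg hz) x hxK (by rwa [dist_eq_norm])
    rw [dist_eq_norm] at this
    exact this.le
  have happly :
      (Fmap a b ξ f (μ₀ + h) - Fmap a b ξ f μ₀
        - Lam (m := m) (Y := Y) a b ξ hξ hξ1 (Fmap a b ξ g μ₀) h) t
      = f y - f x - (g x) (y - x) := by
    rw [ContinuousMap.sub_apply, ContinuousMap.sub_apply]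
    rw [Fmap_apply hξ hξ1 (hf.continuousOn) hμ₀h, Fmap_apply hξ hξ1 (hf.continuousOn) hμ₀]
    rw [Lam_apply, Fmap_apply hξ hξ1 hgcont hμ₀]
    rw [hyx, map_smul]
  rw [happly]
  calc ‖f y - f x - (g x) (y - x)‖ ≤ ε * ‖y - x‖ := key
    _ ≤ ε * ‖h‖ := mul_le_mul_of_nonneg_left hyxnorm hε.le

/-- The key result for natural `n`. -/
lemma Fmap_contDiffOn (m : ℕ) (r : ℝ) (hr : 0 < r) (a b : ℝ) (hab : a ≤ b)
    (ξ : Set.Icc a b → ℝ) (hξ : Continuous ξ) (hξ1 : ∀ t, |ξ t| ≤ 1) :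
    ∀ (n : ℕ) (Y : Type*) [NormedAddCommGroup Y] [NormedSpace ℝ Y]
      (f : EuclideanSpace ℝ (Fin m) → Y),
      ContDiffOn ℝ n f (ball (0 : EuclideanSpace ℝ (Fin m)) r) →
      ContDiffOn ℝ n (Fmap a b ξ f) (ball (0 : EuclideanSpace ℝ (Fin m)) r) := by
  intro n
  induction n with
  | zero =>
    intro Y _ _ f hf
    rw [Nat.cast_zero, contDiffOn_zero] at hf ⊢
    -- continuity of `Fmap f` via uniform continuity on compact balls
    intro μ₀ hμ₀
    apply ContinuousAt.continuousWithinAt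
    rw [Metric.continuousAt_iff]
    intro ε hε
    have hr₀ : ‖μ₀‖ < r := mem_ball_zero_iff.mp hμ₀
    set ρ : ℝ := (‖μ₀‖ + r) / 2 with hρ_def
    have hρ1 : ‖μ₀‖ < ρ := by rw [hρ_def]; linarith
    have hρ2 : ρ < r := by rw [hρ_def]; linarith
    set K : Set (EuclideanSpace ℝ (Fin m)) := closedBall 0 ρ with hK_def
    have hKball : K ⊆ ball 0 r := closedBall_subset_ball hρ2
    have hKcompact : IsCompact K := isCompact_closedBall _ _
    have hfuc : UniformContinuousOn f K :=
      hKcompact.uniformContinuousOn_of_continuous (hf.mono hKball)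
    obtain ⟨δ, hδpos, hδ⟩ := Metric.uniformContinuousOn_iff.mp hfuc (ε / 2) (by positivity)
    refine ⟨min δ ((r - ‖μ₀‖) / 2), lt_min hδpos (by linarith), ?_⟩
    intro μ hμ
    have hμδ : ‖μ - μ₀‖ < δ := by
      rw [dist_eq_norm] at hμ
      exact lt_of_lt_of_le hμ (min_le_left _ _)
    have hμρ : ‖μ‖ ≤ ρ := by
      rw [dist_eq_norm] at hμ
      have : ‖μ - μ₀‖ < (r - ‖μ₀‖) / 2 := lt_of_lt_of_le hμ (min_le_right _ _)
      calc ‖μ‖ = ‖μ₀ + (μ - μ₀)‖ := by rw [show μ₀ + (μ - μ₀) = μ from by abel]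
        _ ≤ ‖μ₀‖ + ‖μ - μ₀‖ := norm_add_le _ _
        _ ≤ ρ := by rw [hρ_def]; linarith
    have hμball : μ ∈ ball (0 : EuclideanSpace ℝ (Fin m)) r :=
      mem_ball_zero_iff.mpr (lt_of_le_of_lt hμρ hρ2)
    have : dist (Fmap a b ξ f μ) (Fmap a b ξ f μ₀) ≤ ε / 2 := by
      rw [ContinuousMap.dist_le (by positivity)]
      intro t
      rw [Fmap_apply hξ hξ1 hf hμball, Fmap_apply hξ hξ1 hf hμ₀]
      have hxK : ξ t • μ ∈ K := by
        rw [hK_def, mem_closedBall_zero_iff, norm_smul, Real.norm_eq_abs]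
        calc |ξ t| * ‖μ‖ ≤ 1 * ‖μ‖ := mul_le_mul_of_nonneg_right (hξ1 t) (norm_nonneg _)
          _ ≤ ρ := by rw [one_mul]; exact hμρ
      have hyK : ξ t • μ₀ ∈ K := by
        rw [hK_def, mem_closedBall_zero_iff, norm_smul, Real.norm_eq_abs]
        calc |ξ t| * ‖μ₀‖ ≤ 1 * ‖μ₀‖ := mul_le_mul_of_nonneg_right (hξ1 t) (norm_nonneg _)
          _ ≤ ρ := by rw [one_mul]; exact hρ1.le
      have hdist : dist (ξ t • μ) (ξ t • μ₀) < δ := by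
        rw [dist_eq_norm, ← smul_sub, norm_smul, Real.norm_eq_abs]
        calc |ξ t| * ‖μ - μ₀‖ ≤ 1 * ‖μ - μ₀‖ :=
              mul_le_mul_of_nonneg_right (hξ1 t) (norm_nonneg _)
          _ = ‖μ - μ₀‖ := one_mul _
          _ < δ := hμδ
      exact (hδ _ hxK _ hyK hdist).le
    exact lt_of_le_of_lt this (by linarith)
  | succ n IH =>
    intro Y _ _ f hf
    have hf1 : ContDiffOn ℝ 1 f (ball (0 : EuclideanSpace ℝ (Fin m)) r) :=
      hf.of_le (by exact_mod_cast Nat.one_le_iff_ne_zero.mpr (Nat.succ_ne_zero n))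
    have hg : ContDiffOn ℝ n (fderiv ℝ f) (ball (0 : EuclideanSpace ℝ (Fin m)) r) :=
      hf.fderiv_of_isOpen isOpen_ball (by exact_mod_cast le_rfl)
    have hder : ∀ μ ∈ ball (0 : EuclideanSpace ℝ (Fin m)) r,
        HasFDerivAt (Fmap a b ξ f)
          (Lam (m := m) (Y := Y) a b ξ hξ hξ1 (Fmap a b ξ (fderiv ℝ f) μ)) μ :=
      fun μ hμ => Fmap_hasFDerivAt hab hξ hξ1 hf1 hμ
    rw [show ((n + 1 : ℕ) : WithTop ℕ∞) = (n : WithTop ℕ∞) + 1 by norm_cast,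
      contDiffOn_succ_iff_fderiv_of_isOpen isOpen_ball]
    refine ⟨fun μ hμ => ((hder μ hμ).differentiableAt).differentiableWithinAt,
      fun h => absurd h (by simp), ?_⟩
    have hLam : ContDiff ℝ (n : WithTop ℕ∞) (Lam (m := m) (Y := Y) a b ξ hξ hξ1) := by
      set_option maxHeartbeats 1000000 in
      set_option synthInstance.maxHeartbeats 400000 in
      exact ContinuousLinearMap.contDiff _
    have hcomp :
        ContDiffOn ℝ n
          (fun μ => Lam (m := m) (Y := Y) a b ξ hξ hξ1 (Fmap a b ξ (fderiv ℝ f) μ))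
          (ball (0 : EuclideanSpace ℝ (Fin m)) r) :=
      hLam.comp_contDiffOn (IH _ (fderiv ℝ f) hg)
    exact hcomp.congr fun μ hμ => (hder μ hμ).fderiv

end Aux

/-- if `f : B(0,r) → X` is `C^k` and `ξ : I → [0,1]` is continuous on a
compact interval, then `μ ↦ (t ↦ f(ξ(t)·μ))` is `C^k` from `B(0,r)` into `C(I,X)`. -/
theorem parameter_map_contDiff_into_continuousMaps
    (m : ℕ) (X : Type*) [NormedAddCommGroup X] [NormedSpace ℝ X] [CompleteSpace X]
    (k : ℕ∞) (r : ℝ) (hr : 0 < r)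
    (f : EuclideanSpace ℝ (Fin m) → X)
    (hf : ContDiffOn ℝ k f (ball (0 : EuclideanSpace ℝ (Fin m)) r))
    (a b : ℝ) (hab : a ≤ b)
    (ξ : Set.Icc a b → ℝ) (hξ : Continuous ξ)
    (hξ_range : ∀ t, ξ t ∈ Icc (0 : ℝ) 1) :
    ∃ F : EuclideanSpace ℝ (Fin m) → C(Set.Icc a b, X),
      (∀ μ ∈ ball (0 : EuclideanSpace ℝ (Fin m)) r, ∀ t : Set.Icc a b,
        F μ t = f (ξ t • μ)) ∧
      ContDiffOn ℝ k F (ball (0 : EuclideanSpace ℝ (Fin m)) r) := by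
  have hξ1 : ∀ t, |ξ t| ≤ 1 := fun t =>
    abs_le.mpr ⟨by linarith [(hξ_range t).1], (hξ_range t).2⟩
  refine ⟨Fmap a b ξ f, fun μ hμ t => Fmap_apply hξ hξ1 hf.continuousOn hμ t, ?_⟩
  induction k using ENat.recTopCoe with
  | top =>
    rw [contDiffOn_infty] at hf ⊢
    exact fun n => Fmap_contDiffOn m r hr a b hab ξ hξ hξ1 n X f (hf n)
  | coe n =>
    have : ContDiffOn ℝ (n : WithTop ℕ∞) f (ball (0 : EuclideanSpace ℝ (Fin m)) r) := by
      exact_mod_cast hf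
    have h2 := Fmap_contDiffOn m r hr a b hab ξ hξ hξ1 n X f this
    exact_mod_cast h2
end

section
/- Let X be a Banach space, r > 0, and f : B(0,r) → X real analytic, in the sense that around every point f is given by a convergent power series in the coordinates of μ with coefficients multilinear maps into X. Let ξ : I → [0,1] be continuous on a compact interval I and set F(μ)(t) := f(ξ(t)μ). Then μ ↦ F(μ) is real analytic from B(0,r) into C(I,X). -/
open Metric Set

open scoped NNReal ENNReal Topology

lemma my_choose_le_two_pow (n k : ℕ) : n.choose k ≤ 2 ^ n := by
  rcases le_or_gt k n with h | h
  · calc n.choose k ≤ ∑ m ∈ Finset.range (n+1), n.choose m :=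
        Finset.single_le_sum (fun i _ => Nat.zero_le _) (Finset.mem_range.2 (Nat.lt_succ_of_le h))
    _ = 2 ^ n := Nat.sum_range_choose n
  · simp [Nat.choose_eq_zero_of_lt h]

-- (n+j)! ≤ j! * 2^(n+j) * n!
lemma my_factorial_ratio (n j : ℕ) :
    ((n+j).factorial : ℝ) ≤ (j.factorial : ℝ) * 2 ^ (n+j) * n.factorial := by
  have h := Nat.add_choose_mul_factorial_mul_factorial n j
  have h2 : (n+j).choose j ≤ 2 ^ (n+j) := my_choose_le_two_pow _ _
  calc ((n+j).factorial : ℝ) = ((n+j).choose j : ℝ) * n.factorial * j.factorial := by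
        exact_mod_cast h.symm
    _ ≤ (2:ℝ) ^ (n+j) * n.factorial * j.factorial := by
        gcongr
        exact_mod_cast h2
    _ = (j.factorial : ℝ) * 2 ^ (n+j) * n.factorial := by ring

section DerivSeries
variable {E F : Type*} [NormedAddCommGroup E] [NormedSpace ℝ E]
  [NormedAddCommGroup F] [NormedSpace ℝ F]

lemma my_norm_changeOriginSeries_one (p : FormalMultilinearSeries ℝ E F) (m : ℕ) :
    ‖p.changeOriginSeries 1 m‖ ≤ (m+1) * ‖p (m+1)‖ := by
  have h := p.nnnorm_changeOriginSeries_le_tsum 1 m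
  have hcard : Fintype.card { s : Finset (Fin (1 + m)) // s.card = m } = m + 1 := by
    rw [Fintype.card_subtype, ← Finset.powerset_univ, ← Finset.powersetCard_eq_filter,
      Finset.card_powersetCard, Finset.card_univ, Fintype.card_fin]
    rw [Nat.add_comm 1 m, Nat.choose_succ_self_right]
  have h2 : (∑' _ : { s : Finset (Fin (1 + m)) // s.card = m }, ‖p (1 + m)‖₊)
      = (m+1) • ‖p (1 + m)‖₊ := by
    rw [tsum_fintype, Finset.sum_const, Finset.card_univ, hcard]
  rw [h2] at h
  have h3 : ‖p.changeOriginSeries 1 m‖ ≤ (m+1) • ‖p (1+m)‖ := by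
    exact_mod_cast h
  rw [nsmul_eq_mul] at h3
  refine h3.trans_eq ?_
  rw [Nat.add_comm 1 m]
  norm_num

lemma my_norm_derivSeries (p : FormalMultilinearSeries ℝ E F) (m : ℕ) :
    ‖p.derivSeries m‖ ≤ (m+1) * ‖p (m+1)‖ := by
  refine le_trans ?_ (my_norm_changeOriginSeries_one p m)
  rw [FormalMultilinearSeries.derivSeries,
    ContinuousLinearMap.compFormalMultilinearSeries_apply]
  refine (ContinuousLinearMap.norm_compContinuousMultilinearMap_le _ _).trans ?_
  refine mul_le_of_le_one_left (norm_nonneg _) ?_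
  refine ContinuousLinearMap.opNorm_le_bound _ zero_le_one ?_
  intro v; simp

end DerivSeries

section Bounds
universe u v
variable {E : Type u} [NormedAddCommGroup E] [NormedSpace ℝ E]

/-- hypothesis transport along derivSeries -/
lemma my_hyp_step {F : Type*} [NormedAddCommGroup F] [NormedSpace ℝ F]
    (p : FormalMultilinearSeries ℝ E F) (ρ : ℝ) (hρ : 0 ≤ ρ) (A : ℝ) (j : ℕ)
    (hp : ∀ n, ‖p n‖ * ρ ^ (n+j) * n.factorial ≤ A * (n+j).factorial) (n : ℕ) :
    ‖p.derivSeries n‖ * ρ ^ (n+(j+1)) * n.factorial ≤ A * (n+(j+1)).factorial := by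
  have h1 : ‖p.derivSeries n‖ ≤ (n+1) * ‖p (n+1)‖ := my_norm_derivSeries p n
  have h2 := hp (n+1)
  have e1 : n + (j+1) = (n+1) + j := by omega
  rw [e1]
  calc ‖p.derivSeries n‖ * ρ ^ ((n+1)+j) * n.factorial
      ≤ ((n+1) * ‖p (n+1)‖) * ρ ^ ((n+1)+j) * n.factorial := by
        have : (0:ℝ) ≤ ρ ^ ((n+1)+j) * n.factorial := by positivity
        nlinarith [this, norm_nonneg (p.derivSeries n)]
    _ = ‖p (n+1)‖ * ρ ^ ((n+1)+j) * (n+1).factorial := by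
        rw [Nat.factorial_succ]; push_cast; ring
    _ ≤ A * ((n+1)+j).factorial := h2

/-- value bound from coefficient bounds -/
lemma my_value_bound {F : Type*} [NormedAddCommGroup F] [NormedSpace ℝ F]
    {f : E → F} {p : FormalMultilinearSeries ℝ E F} {x₀ : E} {R : ℝ≥0∞}
    (hf : HasFPowerSeriesOnBall f p x₀ R) {ρ : ℝ≥0} (hρ : 0 < ρ) (hρR : (ρ : ℝ≥0∞) ≤ R)
    {A : ℝ} (hA : 0 ≤ A) (j : ℕ)
    (hp : ∀ n, ‖p n‖ * (ρ:ℝ) ^ (n+j) * n.factorial ≤ A * (n+j).factorial)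
    {x : E} (hx : ‖x - x₀‖ < (ρ:ℝ)/4) :
    ‖f x‖ ≤ 2 * A * j.factorial * (2/(ρ:ℝ)) ^ j := by
  set y := x - x₀ with hy
  have hρ' : (0:ℝ) < ρ := hρ
  have hyR : y ∈ Metric.eball (0:E) R := by
    rw [Metric.mem_eball, edist_zero_right, ← ofReal_norm]
    refine lt_of_lt_of_le ?_ hρR
    rw [← ENNReal.ofReal_coe_nnreal]
    exact (ENNReal.ofReal_lt_ofReal_iff hρ').2 (hx.trans_le (by linarith))
  have hsum := hf.hasSum hyR
  have hxeq : x₀ + y = x := by rw [hy]; abel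
  rw [hxeq] at hsum
  -- termwise bound
  have hterm : ∀ n : ℕ, ‖p n fun _ => y‖ ≤ (A * j.factorial * (2/(ρ:ℝ))^j) * (1/2)^n := by
    intro n
    have h1 : ‖p n fun _ => y‖ ≤ ‖p n‖ * ‖y‖ ^ n := by
      simpa using (p n).le_opNorm (fun _ => y)
    have h2 : ‖p n‖ * ‖y‖ ^ n ≤ ‖p n‖ * ((ρ:ℝ)/4) ^ n := by
      gcongr

    -- from hp: ‖p n‖ ≤ A * (n+j)!/(n! * ρ^(n+j))
    have h3 : ‖p n‖ * ((ρ:ℝ)/4) ^ n ≤ (A * j.factorial * (2/(ρ:ℝ))^j) * (1/2)^n := by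
      have hpn := hp n
      have hfac := my_factorial_ratio n j
      have hρpow : (0:ℝ) < (ρ:ℝ) ^ (n+j) := by positivity
      have hnfac : (0:ℝ) < n.factorial := by positivity
      -- ‖p n‖ ≤ A * (n+j)! / (ρ^(n+j) * n!)
      have h4 : ‖p n‖ ≤ A * (n+j).factorial / ((ρ:ℝ) ^ (n+j) * n.factorial) := by
        rw [le_div_iff₀ (by positivity)]
        calc ‖p n‖ * ((ρ:ℝ) ^ (n+j) * n.factorial)
            = ‖p n‖ * (ρ:ℝ) ^ (n+j) * n.factorial := by ring
          _ ≤ A * (n+j).factorial := hpn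
      calc ‖p n‖ * ((ρ:ℝ)/4) ^ n
          ≤ (A * (n+j).factorial / ((ρ:ℝ) ^ (n+j) * n.factorial)) * ((ρ:ℝ)/4) ^ n := by
            gcongr
        _ ≤ (A * ((j.factorial : ℝ) * 2^(n+j) * n.factorial) / ((ρ:ℝ) ^ (n+j) * n.factorial))
              * ((ρ:ℝ)/4) ^ n := by gcongr
        _ = (A * j.factorial * (2/(ρ:ℝ))^j) * (1/2)^n := by
            field_simp
            ring_nf
            have h5 : (ρ:ℝ)^j * (ρ:ℝ)⁻¹^j = 1 := by
              rw [← mul_pow, mul_inv_cancel₀ hρ'.ne', one_pow]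
            have h6 : ((1:ℝ)/4)^n * 2^n = (1/2)^n := by
              rw [← mul_pow]; norm_num
            linear_combination (A*(ρ:ℝ)^n*2^j) * h6 - (A*(ρ:ℝ)^n*2^j*(1/2)^n) * h5
    exact h1.trans (h2.trans h3)
  have hsummable : Summable fun n : ℕ => (A * j.factorial * (2/(ρ:ℝ))^j) * (1/2:ℝ)^n :=
    (summable_geometric_of_lt_one (by norm_num) (by norm_num)).mul_left _
  have hsn : Summable fun n : ℕ => ‖p n fun _ => y‖ :=
    hsummable.of_nonneg_of_le (fun n => norm_nonneg _) hterm
  have hnorm : ‖f x‖ ≤ ∑' n, (A * j.factorial * (2/(ρ:ℝ))^j) * (1/2:ℝ)^n := by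
    calc ‖f x‖ = ‖∑' n, p n fun _ => y‖ := by rw [hsum.tsum_eq]
      _ ≤ ∑' n, ‖p n fun _ => y‖ := norm_tsum_le_tsum_norm hsn
      _ ≤ _ := Summable.tsum_le_tsum hterm hsn hsummable
  refine hnorm.trans ?_
  rw [tsum_mul_left, tsum_geometric_of_lt_one (by norm_num) (by norm_num)]
  refine le_of_eq ?_
  norm_num
  ring
end Bounds
section Bounds2
universe u v
variable {E : Type u} [NormedAddCommGroup E] [NormedSpace ℝ E]

private lemma my_helper : ∀ (k : ℕ) {F : Type (max u v)} [NormedAddCommGroup F]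
    [NormedSpace ℝ F] [CompleteSpace F] {f : E → F} {p : FormalMultilinearSeries ℝ E F}
    {x₀ : E} {R : ℝ≥0∞}
    (_ : HasFPowerSeriesOnBall f p x₀ R) {ρ : ℝ≥0} (_ : 0 < ρ) (_ : (ρ:ℝ≥0∞) ≤ R)
    {A : ℝ} (_ : 0 ≤ A) (j : ℕ)
    (_ : ∀ n, ‖p n‖ * (ρ:ℝ)^(n+j) * n.factorial ≤ A * (n+j).factorial)
    {x : E} (_ : ‖x - x₀‖ < (ρ:ℝ)/4),
    ‖iteratedFDeriv ℝ k f x‖ ≤ 2 * A * (j+k).factorial * (2/(ρ:ℝ))^(j+k) := by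
  intro k
  induction k with
  | zero =>
    intro F _ _ _ f p x₀ R hf ρ hρ hρR A hA j hp x hx
    rw [norm_iteratedFDeriv_zero]
    exact my_value_bound hf hρ hρR hA j hp hx
  | succ k ih =>
    intro F _ _ _ f p x₀ R hf ρ hρ hρR A hA j hp x hx
    rw [← norm_iteratedFDeriv_fderiv]
    have hρ0 : (0:ℝ) ≤ (ρ:ℝ) := le_of_lt hρ
    have h := ih hf.fderiv hρ hρR hA (j+1) (my_hyp_step p (ρ:ℝ) hρ0 A j hp) hx
    have e : j + 1 + k = j + (k+1) := by omega
    rwa [e] at h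

lemma my_iteratedFDeriv_bound {F : Type v} [NormedAddCommGroup F] [NormedSpace ℝ F]
    [CompleteSpace F]
    {f : E → F} {p : FormalMultilinearSeries ℝ E F} {x₀ : E} {R : ℝ≥0∞}
    (hf : HasFPowerSeriesOnBall f p x₀ R) {ρ : ℝ≥0} (hρ : 0 < ρ) (hρR : (ρ:ℝ≥0∞) ≤ R)
    {A : ℝ} (hA : 0 ≤ A) (hp : ∀ n, ‖p n‖ * (ρ:ℝ)^n ≤ A)
    {x : E} (hx : ‖x - x₀‖ < (ρ:ℝ)/4) (k : ℕ) :
    ‖iteratedFDeriv ℝ k f x‖ ≤ 2 * A * k.factorial * (2/(ρ:ℝ))^k := by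
  have hρ0 : (0:ℝ) ≤ (ρ:ℝ) := le_of_lt hρ
  have hp0 : ∀ n, ‖p n‖ * (ρ:ℝ)^(n+0) * n.factorial ≤ A * (n+0).factorial := by
    intro n
    have : ‖p n‖ * (ρ:ℝ)^n * n.factorial ≤ A * n.factorial :=
      mul_le_mul_of_nonneg_right (hp n) (by positivity)
    simpa using this
  cases k with
  | zero =>
    rw [norm_iteratedFDeriv_zero]
    simpa using my_value_bound hf hρ hρR hA 0 hp0 hx
  | succ k =>
    rw [← norm_iteratedFDeriv_fderiv]
    have h := my_helper.{u,v} k hf.fderiv hρ hρR hA 1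
      (my_hyp_step p (ρ:ℝ) hρ0 A 0 hp0) hx
    have e : 1 + k = k + 1 := by omega
    rwa [e] at h

end Bounds2
section Uniform
variable {E : Type*} [NormedAddCommGroup E] [NormedSpace ℝ E]
  {F : Type*} [NormedAddCommGroup F] [NormedSpace ℝ F] [CompleteSpace F]

/-- chart lemma: near a point of analyticity, uniform radius and derivative bounds -/
lemma my_chart {f : E → F} {z : E} (hz : AnalyticAt ℝ f z) :
    ∃ ε : ℝ≥0, 0 < ε ∧ ∃ C : ℝ, 0 < C ∧ ∀ x ∈ ball z (ε:ℝ),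
      (∃ q : FormalMultilinearSeries ℝ E F, HasFPowerSeriesOnBall f q x (ε : ℝ≥0∞)) ∧
      ∀ k : ℕ, ‖iteratedFDeriv ℝ k f x‖ ≤ C * k.factorial * ((ε:ℝ)⁻¹)^k := by
  obtain ⟨p, R, hpR⟩ := hz
  obtain ⟨ρ, hρ0, hρR⟩ := ENNReal.lt_iff_exists_nnreal_btwn.1 hpR.r_pos
  have hρpos : 0 < ρ := by exact_mod_cast hρ0
  have hρr : (0:ℝ) < (ρ:ℝ) := hρpos
  have hρR' : (ρ : ℝ≥0∞) ≤ R := le_of_lt hρR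
  obtain ⟨A, hA0, hA⟩ := p.norm_mul_pow_le_of_lt_radius (hρR.trans_le hpR.r_le)
  refine ⟨ρ/4, by positivity, 2*A, by positivity, fun x hx => ?_⟩
  have hx' : ‖x - z‖ < (ρ:ℝ)/4 := by
    rw [mem_ball, dist_eq_norm] at hx
    simpa [NNReal.coe_div] using hx
  constructor
  · set y := x - z with hy
    have hyρ : (‖y‖₊ : ℝ≥0∞) < (ρ : ℝ≥0∞) := by
      rw [ENNReal.coe_lt_coe, ← NNReal.coe_lt_coe, coe_nnnorm]
      linarith
    have hco := hpR.changeOrigin (hyρ.trans_le hρR')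
    have hzy : z + y = x := by rw [hy]; abel
    rw [hzy] at hco
    refine ⟨p.changeOrigin y, hco.mono (by exact_mod_cast by positivity) ?_⟩
    refine ENNReal.le_sub_of_add_le_right (by simp) ?_
    have h2 : (ρ/4 : ℝ≥0) + ‖y‖₊ ≤ ρ := by
      rw [← NNReal.coe_le_coe]
      push_cast
      linarith
    calc ((ρ/4 : ℝ≥0) : ℝ≥0∞) + (‖y‖₊ : ℝ≥0∞) = ((ρ/4 + ‖y‖₊ : ℝ≥0) : ℝ≥0∞) :=
          (ENNReal.coe_add _ _).symm
      _ ≤ (ρ : ℝ≥0∞) := by exact_mod_cast h2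
      _ ≤ R := hρR'
  · intro k
    have h := my_iteratedFDeriv_bound hpR hρpos hρR' (le_of_lt hA0) hA hx' k
    refine h.trans ?_
    have hb : (2/(ρ:ℝ))^k ≤ (((ρ/4 : ℝ≥0):ℝ)⁻¹)^k := by
      refine pow_le_pow_left₀ (by positivity) ?_ k
      push_cast
      rw [inv_div, div_le_div_iff₀ hρr hρr]
      nlinarith
    calc 2 * A * k.factorial * (2/(ρ:ℝ))^k
        ≤ 2 * A * k.factorial * (((ρ/4 : ℝ≥0):ℝ)⁻¹)^k :=
          mul_le_mul_of_nonneg_left hb (by positivity)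
      _ = _ := by norm_num

/-- uniform radius and derivative bounds on a compact set -/
lemma my_unif {f : E → F} {s : Set E} (hf : AnalyticOnNhd ℝ f s)
    {K : Set E} (hK : IsCompact K) (hKs : K ⊆ s) :
    ∃ ε : ℝ≥0, 0 < ε ∧ ∃ C : ℝ, 0 < C ∧ ∀ x ∈ K,
      (∃ q : FormalMultilinearSeries ℝ E F, HasFPowerSeriesOnBall f q x (ε : ℝ≥0∞)) ∧
      ∀ k : ℕ, ‖iteratedFDeriv ℝ k f x‖ ≤ C * k.factorial * ((ε:ℝ)⁻¹)^k := by
  rcases K.eq_empty_or_nonempty with hKe | hKne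
  · exact ⟨1, one_pos, 1, one_pos, by simp [hKe]⟩
  have hch : ∀ z ∈ K, ∃ (ε : ℝ≥0) (C : ℝ), 0 < ε ∧ 0 < C ∧ ∀ x ∈ ball z (ε:ℝ),
      (∃ q : FormalMultilinearSeries ℝ E F, HasFPowerSeriesOnBall f q x (ε : ℝ≥0∞)) ∧
      ∀ k : ℕ, ‖iteratedFDeriv ℝ k f x‖ ≤ C * k.factorial * ((ε:ℝ)⁻¹)^k := by
    intro z hz
    obtain ⟨ε, hε, C, hC, h⟩ := my_chart (hf z (hKs hz))
    exact ⟨ε, C, hε, hC, h⟩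
  choose! εf Cf hεf hCf hball using hch
  have hcover : K ⊆ ⋃ z ∈ K, ball z (εf z : ℝ) := fun z hz =>
    mem_biUnion hz (mem_ball_self (by exact_mod_cast hεf z hz))
  obtain ⟨T, hTK, hTfin, hTcover⟩ :=
    hK.elim_finite_subcover_image (fun z _ => isOpen_ball) hcover
  have hTne : T.Nonempty := by
    obtain ⟨x, hx⟩ := hKne
    obtain ⟨z, hz, _⟩ := mem_iUnion₂.1 (hTcover hx)
    exact ⟨z, hz⟩
  lift T to Finset E using hTfin with T' hT'
  have hTne' : T'.Nonempty := by simpa using hTne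
  set ε : ℝ≥0 := T'.inf' hTne' εf with hε
  set C : ℝ := T'.sup' hTne' Cf with hC
  have hεpos : 0 < ε := by
    rw [hε, Finset.lt_inf'_iff]
    intro z hz
    exact hεf z (hTK (by simpa using hz))
  have hCpos : 0 < C := by
    obtain ⟨z, hz⟩ := hTne'
    exact lt_of_lt_of_le (hCf z (hTK (by simpa using hz))) (Finset.le_sup' _ hz)
  refine ⟨ε, hεpos, C, hCpos, fun x hx => ?_⟩
  obtain ⟨z, hz, hxz⟩ := mem_iUnion₂.1 (hTcover hx)
  have hzT' : z ∈ T' := by simpa using hz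
  have hzK : z ∈ K := hTK (by simpa using hz)
  have hεz : ε ≤ εf z := Finset.inf'_le _ hzT'
  have hCz : Cf z ≤ C := Finset.le_sup' _ hzT'
  obtain ⟨⟨q, hq⟩, hbd⟩ := hball z hzK x hxz
  constructor
  · exact ⟨q, hq.mono (by exact_mod_cast hεpos) (by exact_mod_cast hεz)⟩
  · intro k
    refine (hbd k).trans ?_
    have h1 : ((εf z : ℝ))⁻¹ ^ k ≤ ((ε:ℝ))⁻¹ ^ k := by
      refine pow_le_pow_left₀ (by positivity) ?_ k
      refine inv_anti₀ (by exact_mod_cast hεpos) (by exact_mod_cast hεz)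
    calc Cf z * k.factorial * ((εf z:ℝ))⁻¹^k
        ≤ C * k.factorial * ((εf z:ℝ))⁻¹^k := by
          have hpk : (0:ℝ) ≤ k.factorial * ((εf z:ℝ))⁻¹^k := by positivity
          nlinarith [hpk]
      _ ≤ C * k.factorial * ((ε:ℝ))⁻¹^k :=
          mul_le_mul_of_nonneg_left h1 (by positivity)
end Uniform
set_option maxHeartbeats 1000000 in
/-- if `f : B(0,r) → X` is real analytic and `ξ : I → [0,1]` is
continuous on a compact interval, then `μ ↦ (t ↦ f(ξ(t)·μ))` is real analytic from
`B(0,r)` into `C(I,X)`. -/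
theorem parameter_map_analytic_into_continuousMaps
    (m : ℕ) (X : Type*) [NormedAddCommGroup X] [NormedSpace ℝ X] [CompleteSpace X]
    (r : ℝ) (hr : 0 < r)
    (f : EuclideanSpace ℝ (Fin m) → X)
    (hf : AnalyticOnNhd ℝ f (ball (0 : EuclideanSpace ℝ (Fin m)) r))
    (a b : ℝ) (hab : a ≤ b)
    (ξ : Set.Icc a b → ℝ) (hξ : Continuous ξ)
    (hξ_range : ∀ t, ξ t ∈ Icc (0 : ℝ) 1) :
    ∃ F : EuclideanSpace ℝ (Fin m) → C(Set.Icc a b, X),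
      (∀ μ ∈ ball (0 : EuclideanSpace ℝ (Fin m)) r, ∀ t : Set.Icc a b,
        F μ t = f (ξ t • μ)) ∧
      AnalyticOnNhd ℝ F (ball (0 : EuclideanSpace ℝ (Fin m)) r) := by
  classical
  have habs : ∀ t : Set.Icc a b, |ξ t| ≤ 1 := fun t =>
    abs_le.2 ⟨by linarith [(hξ_range t).1], (hξ_range t).2⟩
  have hsm : ∀ (t : Set.Icc a b) (μ : EuclideanSpace ℝ (Fin m)), ‖ξ t • μ‖ ≤ ‖μ‖ := by
    intro t μ
    rw [norm_smul, Real.norm_eq_abs]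
    calc |ξ t| * ‖μ‖ ≤ 1 * ‖μ‖ :=
      mul_le_mul_of_nonneg_right (habs t) (norm_nonneg μ)
    _ = ‖μ‖ := one_mul _
  have hcont : ∀ μ ∈ ball (0 : EuclideanSpace ℝ (Fin m)) r, Continuous fun t : Set.Icc a b => f (ξ t • μ) := by
    intro μ hμ
    refine (hf.continuousOn).comp_continuous (hξ.smul continuous_const) fun t => ?_
    rw [mem_ball_zero_iff]
    exact lt_of_le_of_lt (hsm t μ) (mem_ball_zero_iff.1 hμ)
  set F : EuclideanSpace ℝ (Fin m) → C(Set.Icc a b, X) := fun μ =>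
    if hμ : μ ∈ ball (0 : EuclideanSpace ℝ (Fin m)) r then ⟨fun t => f (ξ t • μ), hcont μ hμ⟩ else 0 with hF
  refine ⟨F, ?_, ?_⟩
  · intro μ hμ t
    rw [hF]
    simp only [dif_pos hμ]
    rfl
  intro μ₀ hμ₀
  have hμ₀r : ‖μ₀‖ < r := mem_ball_zero_iff.1 hμ₀
  set K : Set (EuclideanSpace ℝ (Fin m)) := closedBall 0 ‖μ₀‖ with hK
  have hKb : K ⊆ ball (0 : EuclideanSpace ℝ (Fin m)) r := closedBall_subset_ball hμ₀r
  have hKc : IsCompact K := isCompact_closedBall _ _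
  obtain ⟨ε, hε, C, hC, hU⟩ := my_unif hf hKc hKb
  have hεr : (0:ℝ) < (ε:ℝ) := hε
  have hmemK : ∀ t : Set.Icc a b, ξ t • μ₀ ∈ K := fun t =>
    mem_closedBall_zero_iff.2 (hsm t μ₀)
  have hDt : ∀ n : ℕ, Continuous fun t : Set.Icc a b => iteratedFDeriv ℝ n f (ξ t • μ₀) := by
    intro n
    refine ((hf.iteratedFDeriv n).continuousOn).comp_continuous
      (hξ.smul continuous_const) fun t => hKb (hmemK t)
  -- the coefficient functions
  set g : ∀ n : ℕ, (Fin n → EuclideanSpace ℝ (Fin m)) → C(Set.Icc a b, X) := fun n v =>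
    ⟨fun t => (n.factorial : ℝ)⁻¹ •
        (iteratedFDeriv ℝ n f (ξ t • μ₀) (fun i => ξ t • v i)),
      by
        refine Continuous.const_smul ?_ _
        have h1 : Continuous fun t : Set.Icc a b =>
            ((iteratedFDeriv ℝ n f (ξ t • μ₀) :
              ContinuousMultilinearMap ℝ (fun _ : Fin n => EuclideanSpace ℝ (Fin m)) X),
              fun i : Fin n => ξ t • v i) :=
          (hDt n).prodMk (continuous_pi fun i => hξ.smul continuous_const)
        exact ContinuousEval.continuous_eval.comp h1⟩ with hg
  have hgapp : ∀ n v (t : Set.Icc a b), g n v t = (n.factorial : ℝ)⁻¹ •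
      (iteratedFDeriv ℝ n f (ξ t • μ₀) (fun i => ξ t • v i)) := fun n v t => rfl
  have hgnorm : ∀ n v, ‖g n v‖ ≤ (C * ((ε:ℝ)⁻¹)^n) * ∏ i, ‖v i‖ := by
    intro n v
    refine (ContinuousMap.norm_le _ (by positivity)).2 fun t => ?_
    rw [hgapp]
    obtain ⟨-, hbd⟩ := hU (ξ t • μ₀) (hmemK t)
    have h1 : ‖iteratedFDeriv ℝ n f (ξ t • μ₀) fun i => ξ t • v i‖ ≤
        (C * n.factorial * ((ε:ℝ)⁻¹)^n) * ∏ i, ‖v i‖ := by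
      calc ‖iteratedFDeriv ℝ n f (ξ t • μ₀) fun i => ξ t • v i‖
          ≤ ‖iteratedFDeriv ℝ n f (ξ t • μ₀)‖ * ∏ i, ‖ξ t • v i‖ :=
            ContinuousMultilinearMap.le_opNorm _ _
        _ ≤ (C * n.factorial * ((ε:ℝ)⁻¹)^n) * ∏ i, ‖v i‖ := by
            refine mul_le_mul (hbd n) ?_ (by positivity) (by positivity)
            exact Finset.prod_le_prod (fun i _ => norm_nonneg _) (fun i _ => hsm t (v i))
    rw [norm_smul, Real.norm_eq_abs, abs_of_nonneg (by positivity)]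
    calc (n.factorial : ℝ)⁻¹ * ‖iteratedFDeriv ℝ n f (ξ t • μ₀) fun i => ξ t • v i‖
        ≤ (n.factorial : ℝ)⁻¹ * ((C * n.factorial * ((ε:ℝ)⁻¹)^n) * ∏ i, ‖v i‖) := by
          exact mul_le_mul_of_nonneg_left h1 (by positivity)
      _ = (C * ((ε:ℝ)⁻¹)^n) * ∏ i, ‖v i‖ := by
          have hne : (n.factorial : ℝ) ≠ 0 := by positivity
          field_simp
  -- multilinearity
  have hupd : ∀ (t : Set.Icc a b) (n : ℕ) (v : Fin n → EuclideanSpace ℝ (Fin m)) (i : Fin n) (z : EuclideanSpace ℝ (Fin m)),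
      (fun j => ξ t • Function.update v i z j) =
        Function.update (fun j => ξ t • v j) i (ξ t • z) := by
    intro t n v i z
    funext j
    exact Function.apply_update (fun _ w => ξ t • w) v i z j
  set P : FormalMultilinearSeries ℝ (EuclideanSpace ℝ (Fin m)) C(Set.Icc a b, X) := fun n =>
    MultilinearMap.mkContinuous
      { toFun := g n
        map_update_add' := by
          intro dec v i x y
          have hdec : dec = instDecidableEqFin n := Subsingleton.elim _ _
          subst hdec
          ext t
          simp only [hgapp, ContinuousMap.add_apply]
          rw [hupd, hupd, hupd, smul_add,
            (iteratedFDeriv ℝ _ f (ξ t • μ₀)).map_update_add, smul_add]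
        map_update_smul' := by
          intro dec v i c x
          have hdec : dec = instDecidableEqFin n := Subsingleton.elim _ _
          subst hdec
          ext t
          simp only [hgapp, ContinuousMap.smul_apply]
          rw [hupd, hupd, smul_comm (ξ t) c,
            (iteratedFDeriv ℝ _ f (ξ t • μ₀)).map_update_smul, smul_comm _ c] }
      (C * ((ε:ℝ)⁻¹)^n) (hgnorm n) with hP
  have hPapp : ∀ n (v : Fin n → EuclideanSpace ℝ (Fin m)), P n v = g n v := by
    intro n v
    rw [hP]
    exact congrFun (MultilinearMap.coe_mkContinuous _ _ _) v
  have hPle : ∀ n, ‖P n‖ ≤ C * ((ε:ℝ)⁻¹)^n := fun n =>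
    MultilinearMap.mkContinuous_norm_le _ (by positivity) _
  set δ : ℝ := min ((ε:ℝ)/2) (r - ‖μ₀‖) with hδ
  have hδpos : 0 < δ := lt_min (by positivity) (by linarith)
  refine ⟨P, ENNReal.ofReal δ, ?_, ENNReal.ofReal_pos.2 hδpos, ?_⟩
  · -- r_le
    have h1 : (ε : ℝ≥0∞) ≤ P.radius := by
      refine P.le_radius_of_bound C fun n => ?_
      have h2 : ((ε:ℝ)⁻¹)^n * (ε:ℝ)^n = 1 := by
        rw [← mul_pow, inv_mul_cancel₀ (ne_of_gt hεr), one_pow]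
      calc ‖P n‖ * (ε:ℝ)^n ≤ (C * ((ε:ℝ)⁻¹)^n) * (ε:ℝ)^n :=
            mul_le_mul_of_nonneg_right (hPle n) (by positivity)
        _ = C := by rw [mul_assoc, h2, mul_one]
    refine le_trans ?_ h1
    rw [← ENNReal.ofReal_coe_nnreal]
    refine ENNReal.ofReal_le_ofReal ?_
    calc δ ≤ (ε:ℝ)/2 := min_le_left _ _
      _ ≤ (ε:ℝ) := by linarith
  · -- hasSum
    intro y hy
    have hyn : ‖y‖ < δ := by
      rw [Metric.mem_eball, edist_zero_right, ← ofReal_norm] at hy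
      exact (ENNReal.ofReal_lt_ofReal_iff hδpos).1 hy
    have hyε : ‖y‖ < (ε:ℝ) := lt_of_lt_of_le hyn (le_trans (min_le_left _ _) (by linarith))
    have hμy : μ₀ + y ∈ ball (0 : EuclideanSpace ℝ (Fin m)) r := by
      rw [mem_ball_zero_iff]
      calc ‖μ₀ + y‖ ≤ ‖μ₀‖ + ‖y‖ := norm_add_le _ _
        _ < ‖μ₀‖ + (r - ‖μ₀‖) := by
            have := lt_of_lt_of_le hyn (min_le_right _ _)
            linarith
        _ = r := by ring
    -- pointwise sums
    have hpt : ∀ t : Set.Icc a b, HasSum (fun n => (P n fun _ => y) t) (f (ξ t • (μ₀ + y))) := by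
      intro t
      obtain ⟨⟨q, hq⟩, -⟩ := hU (ξ t • μ₀) (hmemK t)
      have hyb : ξ t • y ∈ Metric.eball (0 : EuclideanSpace ℝ (Fin m)) (ε : ℝ≥0∞) := by
        rw [Metric.mem_eball, edist_zero_right, ← ofReal_norm,
          ← ENNReal.ofReal_coe_nnreal]
        exact (ENNReal.ofReal_lt_ofReal_iff hεr).2 (lt_of_le_of_lt (hsm t y) hyε)
      have hsum := hq.hasSum_iteratedFDeriv hyb
      rw [← smul_add] at hsum
      convert hsum using 2
      rw [hPapp, hgapp]
    -- summability in C(I,X)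
    have hb : ∀ n : ℕ, ‖P n fun _ => y‖ ≤ C * (1/2:ℝ)^n := by
      intro n
      have h3 : ((ε:ℝ))⁻¹ * ‖y‖ ≤ 1/2 := by
        have : ‖y‖ ≤ (ε:ℝ)/2 := le_of_lt (lt_of_lt_of_le hyn (min_le_left _ _))
        calc ((ε:ℝ))⁻¹ * ‖y‖ ≤ ((ε:ℝ))⁻¹ * ((ε:ℝ)/2) :=
              mul_le_mul_of_nonneg_left this (by positivity)
          _ = 1/2 := by field_simp
      calc ‖P n fun _ => y‖ ≤ ‖P n‖ * ∏ _i : Fin n, ‖y‖ :=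
            ContinuousMultilinearMap.le_opNorm _ _
        _ = ‖P n‖ * ‖y‖^n := by
            rw [Finset.prod_const, Finset.card_univ, Fintype.card_fin]
        _ ≤ (C * ((ε:ℝ)⁻¹)^n) * ‖y‖^n :=
            mul_le_mul_of_nonneg_right (hPle n) (by positivity)
        _ = C * (((ε:ℝ))⁻¹ * ‖y‖)^n := by rw [mul_pow, mul_assoc]
        _ ≤ C * (1/2:ℝ)^n := by
            refine mul_le_mul_of_nonneg_left ?_ (le_of_lt hC)
            exact pow_le_pow_left₀ (by positivity) h3 n
    have hsummable : Summable fun n => P n fun _ => y := by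
      refine Summable.of_norm ?_
      refine Summable.of_nonneg_of_le (fun n => norm_nonneg _) hb ?_
      exact (summable_geometric_of_lt_one (by norm_num) (by norm_num)).mul_left C
    have hS := hsummable.hasSum
    have hid : (∑' n, P n fun _ => y) = F (μ₀ + y) := by
      ext t
      have h1 : HasSum (fun n => (P n fun _ => y) t) ((∑' n, P n fun _ => y) t) :=
        ContinuousMap.hasSum_apply hS t
      have h2 := hpt t
      have h3 : (∑' n, P n fun _ => y) t = f (ξ t • (μ₀ + y)) := h2.unique h1 ▸ rfl
      rw [h3, hF]
      simp only [dif_pos hμy]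
      rfl
    rw [← hid]
    exact hS
end
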